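/- Define F: ℂ⁶ → ℂ⁶ by F(a,b,c,d,e,f) = (d, (b²-df)/e, f, (d²-fb)/a, b, (f²-bd)/c). For any t, b, d, f ∈ ℂ with t ≠ 0 and with the intermediate denominators nonzero, the second iterate F²(t,b,t,d,t,f) has its second, fourth, and sixth coordinates all equal to (b³ + d³ + f³ - 3bdf)/t². -/
import Mathlib


noncomputable def devronF : ℂ × ℂ × ℂ × ℂ × ℂ × ℂ → ℂ × ℂ × ℂ × ℂ × ℂ × ℂ
  | (a, b, c, d, e, f) =>
      (d, (b ^ 2 - d * f) / e, f, (d ^ 2 - f * b) / a, b, (f ^ 2 - b * d) / c)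

/-- The second, fourth and sixth coordinates of `F²(t,b,t,d,t,f)` all equal
`(b³ + d³ + f³ - 3bdf)/t²`. -/
theorem devron_stmt_3 (t b d f : ℂ) (ht : t ≠ 0)
    (hb : b ≠ 0) (hd : d ≠ 0) (hf : f ≠ 0) :
    ∃ p q r : ℂ,
      devronF (devronF (t, b, t, d, t, f)) =
        (p, (b ^ 3 + d ^ 3 + f ^ 3 - 3 * b * d * f) / t ^ 2,
         q, (b ^ 3 + d ^ 3 + f ^ 3 - 3 * b * d * f) / t ^ 2,
         r, (b ^ 3 + d ^ 3 + f ^ 3 - 3 * b * d * f) / t ^ 2) := by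
  refine ⟨(d ^ 2 - f * b) / t, (f ^ 2 - b * d) / t, (b ^ 2 - d * f) / t, ?_⟩
  simp only [devronF, Prod.mk.injEq]
  and_intros <;> first | trivial | (field_simp; ring)
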